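/- If G is a forest, then pmd(G) = Δ(G): the positive matching decomposition number of a forest equals its maximal vertex degree. -/

import Mathlib

/-- A set of edges is a matching: the edges are pairwise vertex-disjoint. -/
def EdgesDisjoint {V : Type*} (M : Set (Sym2 V)) : Prop :=
  ∀ e ∈ M, ∀ e' ∈ M, e ≠ e' → ∀ v : V, ¬(v ∈ e ∧ v ∈ e')

/-- `M` is a positive matching of the graph with edge set `E'`: it is a matching
contained in `E'` admitting a weight function `w` whose edge sums are positive on `M`
and negative on `E' \ M`. -/
def IsPositiveMatchingOn {V : Type*} (E' M : Set (Sym2 V)) : Prop :=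
  M ⊆ E' ∧ EdgesDisjoint M ∧
  ∃ w : V → ℝ, ∀ i j : V, s(i, j) ∈ E' →
    (s(i, j) ∈ M → 0 < w i + w j) ∧ (s(i, j) ∉ M → w i + w j < 0)

/-- `M : Fin p → Set (Sym2 V)` is a positive matching decomposition of `G`:
a partition of the edge set into pairwise disjoint parts such that each `M ℓ`
is a positive matching of `(V, E(G) \ (M₀ ∪ ⋯ ∪ M_{ℓ-1}))`. -/
def IsPMDecomp {V : Type*} (G : SimpleGraph V) (p : ℕ) (M : Fin p → Set (Sym2 V)) : Prop :=
  (∀ ℓ, M ℓ ⊆ G.edgeSet) ∧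
  (∀ e ∈ G.edgeSet, ∃! ℓ, e ∈ M ℓ) ∧
  (∀ ℓ : Fin p, IsPositiveMatchingOn (G.edgeSet \ ⋃ ℓ' ∈ {ℓ' | ℓ' < ℓ}, M ℓ') (M ℓ))

/-- The positive matching decomposition number of `G`. -/
noncomputable def pmd {V : Type*} (G : SimpleGraph V) : ℕ :=
  sInf {p | ∃ M : Fin p → Set (Sym2 V), IsPMDecomp G p M}


open SimpleGraph

lemma pmd_aux_exists_leaf {V : Type*} [Fintype V] (G : SimpleGraph V) (hG : G.IsAcyclic)
    {a b : V} (hab : G.Adj a b) :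
    ∃ u y, G.Adj u y ∧ ∀ x, G.Adj u x → x = y := by
  classical
  set S : Set ℕ := {n | ∃ (u w : V) (p : G.Walk u w), p.IsPath ∧ p.length = n} with hS
  have h1 : 1 ∈ S := by
    refine ⟨a, b, Walk.cons hab Walk.nil, ?_, rfl⟩
    simp [Walk.isPath_def, hab.ne]
  have hbdd : BddAbove S := by
    refine ⟨Fintype.card V, fun n hn => ?_⟩
    obtain ⟨u, w, p, hp, rfl⟩ := hn
    exact hp.length_lt.le
  obtain ⟨u, w, p, hp, hlen⟩ := Nat.sSup_mem ⟨1, h1⟩ hbdd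
  have hmax : ∀ n ∈ S, n ≤ sSup S := fun n hn => le_csSup hbdd hn
  cases p with
  | nil =>
      exfalso
      have := hmax 1 h1
      simp only [Walk.length_nil] at hlen
      omega
  | @cons _ y _ h q =>
      refine ⟨u, y, h, fun x hx => ?_⟩
      by_cases hxs : x ∈ (Walk.cons h q).support
      · have hq : ((Walk.cons h q).takeUntil x hxs).IsPath := hp.takeUntil hxs
        have single : (Walk.cons hx Walk.nil).IsPath := by
          simp [Walk.isPath_def, hx.ne]
        have huniq := hG.path_unique ⟨(Walk.cons h q).takeUntil x hxs, hq⟩ ⟨Walk.cons hx Walk.nil, single⟩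
        have walk_eq : (Walk.cons h q).takeUntil x hxs = Walk.cons hx Walk.nil :=
          congrArg Subtype.val huniq
        have spec := (Walk.cons h q).take_spec hxs
        rw [walk_eq] at spec
        have := congrArg (fun z => Walk.getVert z 1) spec
        simpa [Walk.getVert_cons_succ, Walk.getVert_zero] using this
      · exfalso
        have hp' : (Walk.cons hx.symm (Walk.cons h q)).IsPath := hp.cons hxs
        have : (Walk.cons hx.symm (Walk.cons h q)).length ∈ S := ⟨_, _, _, hp', rfl⟩
        have := hmax _ this
        simp only [Walk.length_cons] at this hlen
        omega

lemma pmd_aux_acyclic_of_le {V : Type*} {G G' : SimpleGraph V} (h : G' ≤ G) (hG : G.IsAcyclic) :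
    G'.IsAcyclic := fun _ c hc => hG (c.mapLe h) (hc.mapLe h)

lemma pmd_aux_forest_weights {V : Type*} [Fintype V] :
    ∀ (n : ℕ) (G : SimpleGraph V), G.edgeSet.ncard ≤ n → G.IsAcyclic →
    ∀ t : Sym2 V → ℝ, ∃ w : V → ℝ, ∀ i j, G.Adj i j → w i + w j = t s(i, j) := by
  classical
  intro n
  induction n with
  | zero =>
      intro G hn _ t
      refine ⟨0, fun i j hij => absurd hij ?_⟩
      have hfin : G.edgeSet.Finite := Set.toFinite _
      have : G.edgeSet = ∅ := (Set.ncard_eq_zero hfin).1 (Nat.le_zero.1 hn)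
      intro h
      exact absurd (G.mem_edgeSet.2 h) (by simp [this])
  | succ n ih =>
      intro G hn hac t
      by_cases hE : G.edgeSet = ∅
      · refine ⟨0, fun i j hij => ?_⟩
        exact absurd (G.mem_edgeSet.2 hij) (by simp [hE])
      · obtain ⟨e, he⟩ := Set.nonempty_iff_ne_empty.2 hE
        induction e using Sym2.ind with
        | _ a b =>
        have hab : G.Adj a b := G.mem_edgeSet.1 he
        obtain ⟨u, y, h, hleaf⟩ := pmd_aux_exists_leaf G hac hab
        set G' := G.deleteEdges {s(u, y)} with hG'
        have hle : G' ≤ G := G.deleteEdges_le _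
        have hES : G'.edgeSet = G.edgeSet \ {s(u, y)} := G.edgeSet_deleteEdges _
        have hn' : G'.edgeSet.ncard ≤ n := by
          have := Set.ncard_diff_singleton_lt_of_mem (G.mem_edgeSet.2 h) (Set.toFinite _)
          rw [← hES] at this
          omega
        obtain ⟨w', hw'⟩ := ih G' hn' (pmd_aux_acyclic_of_le hle hac) t
        refine ⟨fun x => if x = u then t s(u, y) - w' y else w' x, fun i j hij => ?_⟩
        have huy : u ≠ y := h.ne
        by_cases hi : i = u
        · subst hi
          have hj : j = y := hleaf j hij
          subst hj
          simp [huy.symm]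
        · by_cases hj : j = u
          · subst hj
            have hi2 : i = y := hleaf i hij.symm
            subst hi2
            rw [Sym2.eq_swap]
            simp [huy.symm]
          · have hij' : G'.Adj i j := by
              rw [hG', SimpleGraph.deleteEdges_adj]
              refine ⟨hij, fun hmem => ?_⟩
              simp only [Set.mem_singleton_iff, Sym2.eq_iff] at hmem
              rcases hmem with ⟨rfl, rfl⟩ | ⟨rfl, rfl⟩
              · exact hi rfl
              · exact hj rfl
            simp [hi, hj, hw' i j hij']
lemma pmd_aux_forest_coloring {V : Type*} [Fintype V] (c : ℕ) :
    ∀ (n : ℕ) (G : SimpleGraph V), G.edgeSet.ncard ≤ n → G.IsAcyclic →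
    (∀ v, (G.neighborSet v).ncard ≤ c) →
    ∃ col : Sym2 V → ℕ, (∀ e ∈ G.edgeSet, col e < c) ∧
      ∀ i j k : V, G.Adj i j → G.Adj i k → j ≠ k → col s(i, j) ≠ col s(i, k) := by
  classical
  intro n
  induction n with
  | zero =>
      intro G hn _ _
      have hE : G.edgeSet = ∅ := (Set.ncard_eq_zero (Set.toFinite _)).1 (Nat.le_zero.1 hn)
      exact ⟨fun _ => 0, fun e he => absurd he (by simp [hE]),
        fun i j k hj _ _ => absurd (G.mem_edgeSet.2 hj) (by simp [hE])⟩
  | succ n ih =>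
      intro G hn hac hdeg
      by_cases hE : G.edgeSet = ∅
      · exact ⟨fun _ => 0, fun e he => absurd he (by simp [hE]),
          fun i j k hj _ _ => absurd (G.mem_edgeSet.2 hj) (by simp [hE])⟩
      · obtain ⟨e, he⟩ := Set.nonempty_iff_ne_empty.2 hE
        induction e using Sym2.ind with
        | _ a b =>
        have hab : G.Adj a b := G.mem_edgeSet.1 he
        obtain ⟨u, y, hadjuy, hleaf⟩ := pmd_aux_exists_leaf G hac hab
        have huy : u ≠ y := hadjuy.ne
        set G' := G.deleteEdges {s(u, y)} with hG'
        have hle : G' ≤ G := G.deleteEdges_le _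
        have hES : G'.edgeSet = G.edgeSet \ {s(u, y)} := G.edgeSet_deleteEdges _
        have hadj_iff : ∀ v x : V, G'.Adj v x ↔ G.Adj v x ∧ s(v, x) ≠ s(u, y) := by
          intro v x
          rw [hG', SimpleGraph.deleteEdges_adj, Set.mem_singleton_iff]
        have hn' : G'.edgeSet.ncard ≤ n := by
          have := Set.ncard_diff_singleton_lt_of_mem (G.mem_edgeSet.2 hadjuy) (Set.toFinite _)
          rw [← hES] at this
          omega
        have hdeg' : ∀ v, (G'.neighborSet v).ncard ≤ c := fun v =>
          le_trans (Set.ncard_le_ncard (fun x hx => hle hx) (Set.toFinite _)) (hdeg v)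
        obtain ⟨col', hb', hp'⟩ := ih G' hn' (pmd_aux_acyclic_of_le hle hac) hdeg'
        have hN' : G'.neighborSet y = G.neighborSet y \ {u} := by
          ext x
          simp only [mem_neighborSet, Set.mem_diff, Set.mem_singleton_iff, hadj_iff]
          constructor
          · rintro ⟨h1, h2⟩
            refine ⟨h1, fun hxu => h2 ?_⟩
            rw [hxu]
            exact Sym2.eq_swap
          · rintro ⟨h1, h2⟩
            refine ⟨h1, fun hm => ?_⟩
            rw [Sym2.eq_iff] at hm
            rcases hm with ⟨ha, _⟩ | ⟨_, hb2⟩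
            · exact huy ha.symm
            · exact h2 hb2
        set Su : Set ℕ := (fun x => col' s(y, x)) '' (G'.neighborSet y) with hSu
        have hcardSu : Su.ncard ≤ c - 1 := by
          have h1 : Su.ncard ≤ (G'.neighborSet y).ncard :=
            Set.ncard_image_le (Set.toFinite _)
          have h2 : (G'.neighborSet y).ncard = (G.neighborSet y).ncard - 1 := by
            rw [hN', Set.ncard_diff_singleton_of_mem ((G.mem_neighborSet y u).2 hadjuy.symm)]
          have h3 : 1 ≤ (G.neighborSet y).ncard := by
            have : 0 < (G.neighborSet y).ncard :=
              (Set.ncard_pos (Set.toFinite _)).2 ⟨u, (G.mem_neighborSet y u).2 hadjuy.symm⟩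
            omega
          have := hdeg y
          omega
        have hc1 : 1 ≤ c := by
          have : 0 < (G.neighborSet u).ncard :=
            (Set.ncard_pos (Set.toFinite _)).2 ⟨y, (G.mem_neighborSet u y).2 hadjuy⟩
          have := hdeg u
          omega
        obtain ⟨m, hmc, hmSu⟩ : ∃ m, m < c ∧ m ∉ Su := by
          by_contra hcon
          push_neg at hcon
          have hsub : Finset.range c ⊆ (Set.toFinite Su).toFinset := by
            intro m hm
            rw [Set.Finite.mem_toFinset]
            exact hcon m (Finset.mem_range.1 hm)
          have := Finset.card_le_card hsub
          rw [Finset.card_range, ← Set.ncard_eq_toFinset_card Su (Set.toFinite Su)] at this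
          omega
        have hSu_mem : ∀ x : V, G.Adj y x → x ≠ u →
            col' s(y, x) ∈ Su ∧ s(y, x) ≠ s(u, y) := by
          intro x hyx hxu
          have hne : s(y, x) ≠ s(u, y) := by
            rw [Ne, Sym2.eq_iff]
            rintro (⟨ha, _⟩ | ⟨_, hb2⟩)
            · exact huy ha.symm
            · exact hxu hb2
          exact ⟨⟨x, (G'.mem_neighborSet y x).2 ((hadj_iff y x).2 ⟨hyx, hne⟩), rfl⟩, hne⟩
        refine ⟨fun e => if e = s(u, y) then m else col' e, ?_, ?_⟩
        · intro e heE
          show (if e = s(u, y) then m else col' e) < c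
          by_cases h1 : e = s(u, y)
          · rw [if_pos h1]; exact hmc
          · rw [if_neg h1]
            exact hb' e (by rw [hES]; exact ⟨heE, h1⟩)
        · intro i j k hj hk hjk
          show (if s(i, j) = s(u, y) then m else col' s(i, j)) ≠
            (if s(i, k) = s(u, y) then m else col' s(i, k))
          have hne12 : s(i, j) ≠ s(i, k) := fun hh => hjk (Sym2.congr_right.1 hh)
          by_cases h1 : s(i, j) = s(u, y) <;> by_cases h2 : s(i, k) = s(u, y)
          · exact absurd (h1.trans h2.symm) hne12
          · rw [if_pos h1, if_neg h2]
            rw [Sym2.eq_iff] at h1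
            rcases h1 with ⟨hiu, hjy⟩ | ⟨hiy, hju⟩
            · subst hiu
              exact absurd ((hleaf j hj).trans (hleaf k hk).symm) hjk
            · have hku : k ≠ u := fun hk2 => hne12 (by rw [hju, hk2])
              obtain ⟨hmem, _⟩ := hSu_mem k (hiy ▸ hk) hku
              rw [hiy]
              exact fun hh => hmSu (by rw [hh]; exact hmem)
          · rw [if_neg h1, if_pos h2]
            rw [Sym2.eq_iff] at h2
            rcases h2 with ⟨hiu, hky⟩ | ⟨hiy, hku⟩
            · subst hiu
              exact absurd ((hleaf j hj).trans (hleaf k hk).symm) hjk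
            · have hju2 : j ≠ u := fun hj2 => hne12 (by rw [hj2, hku])
              obtain ⟨hmem, _⟩ := hSu_mem j (hiy ▸ hj) hju2
              rw [hiy]
              exact fun hh => hmSu (by rw [← hh]; exact hmem)
          · rw [if_neg h1, if_neg h2]
            exact hp' i j k ((hadj_iff i j).2 ⟨hj, h1⟩) ((hadj_iff i k).2 ⟨hk, h2⟩) hjk

lemma pmd_aux_edge_rep {V : Type*} {G : SimpleGraph V} {e : Sym2 V} {v : V}
    (he : e ∈ G.edgeSet) (hv : v ∈ e) : ∃ a, G.Adj v a ∧ e = s(v, a) := by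
  induction e using Sym2.ind with
  | _ i j =>
    rw [Sym2.mem_iff] at hv
    rcases hv with rfl | rfl
    · exact ⟨j, G.mem_edgeSet.1 he, rfl⟩
    · exact ⟨i, (G.mem_edgeSet.1 he).symm, Sym2.eq_swap.symm⟩

theorem pmd_eq_maxDegree_of_forest {V : Type*} [Fintype V] [DecidableEq V]
    (G : SimpleGraph V) [DecidableRel G.Adj] (hG : G.IsAcyclic) :
    pmd G = G.maxDegree := by
  classical
  set Δ := G.maxDegree with hΔdef
  have hdeg_eq : ∀ v : V, (G.neighborSet v).ncard = G.degree v := by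
    intro v
    rw [Set.ncard_eq_toFinset_card', SimpleGraph.degree, SimpleGraph.neighborFinset_def]
  have hdegΔ : ∀ v, (G.neighborSet v).ncard ≤ Δ := fun v =>
    (hdeg_eq v).le.trans (G.degree_le_maxDegree v)
  obtain ⟨col, hb, hprop⟩ := pmd_aux_forest_coloring Δ (G.edgeSet.ncard) G le_rfl hG hdegΔ
  set M : Fin Δ → Set (Sym2 V) := fun ℓ => {e ∈ G.edgeSet | col e = ℓ.val} with hM
  have hDecomp : IsPMDecomp G Δ M := by
    refine ⟨fun ℓ e he => he.1, ?_, ?_⟩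
    · intro e he
      refine ⟨⟨col e, hb e he⟩, ⟨he, rfl⟩, ?_⟩
      rintro ℓ' ⟨_, hc⟩
      exact Fin.ext hc.symm
    · intro ℓ
      refine ⟨?_, ?_, ?_⟩
      · intro e he
        refine ⟨he.1, ?_⟩
        simp only [Set.mem_iUnion, Set.mem_setOf_eq]
        rintro ⟨ℓ', hℓ', he'⟩
        have h1 : col e = ℓ.val := he.2
        have h2 : col e = ℓ'.val := he'.2
        have h3 : ℓ'.val < ℓ.val := hℓ'
        omega
      · intro e he e' he' hne v hv
        obtain ⟨hv1, hv2⟩ := hv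
        obtain ⟨a1, ha1, rfl⟩ := pmd_aux_edge_rep he.1 hv1
        obtain ⟨a2, ha2, rfl⟩ := pmd_aux_edge_rep he'.1 hv2
        have hne2 : a1 ≠ a2 := fun hh => hne (by rw [hh])
        exact hprop v a1 a2 ha1 ha2 hne2 (by rw [he.2, he'.2])
      · obtain ⟨w, hw⟩ := pmd_aux_forest_weights (G.edgeSet.ncard) G le_rfl hG
          (fun e => if col e = ℓ.val then (1 : ℝ) else -1)
        refine ⟨w, fun i j hij => ?_⟩
        have hedge : s(i, j) ∈ G.edgeSet := hij.1
        have hsum := hw i j (G.mem_edgeSet.1 hedge)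
        constructor
        · intro hM1
          rw [hsum]
          simp only [if_pos hM1.2]
          norm_num
        · intro hM1
          have hc2 : ¬col s(i, j) = ℓ.val := fun hc => hM1 ⟨hedge, hc⟩
          rw [hsum]
          simp only [if_neg hc2]
          norm_num
  have hmemS : Δ ∈ {p | ∃ M : Fin p → Set (Sym2 V), IsPMDecomp G p M} := ⟨M, hDecomp⟩
  have hlow : ∀ p ∈ {p | ∃ M : Fin p → Set (Sym2 V), IsPMDecomp G p M}, Δ ≤ p := by
    rintro p ⟨N, hN1, hN2, hN3⟩
    refine SimpleGraph.maxDegree_le_of_forall_degree_le (G := G) p (fun v => ?_)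
    by_cases hp0 : p = 0
    · subst hp0
      have hnone : ∀ x, ¬G.Adj v x := by
        intro x hx
        obtain ⟨ℓ, -⟩ := hN2 s(v, x) (G.mem_edgeSet.2 hx)
        exact ℓ.elim0
      have hempty : G.neighborFinset v = ∅ :=
        Finset.eq_empty_of_forall_notMem
          (fun x hx => hnone x ((G.mem_neighborFinset v x).1 hx))
      simp [SimpleGraph.degree, hempty]
    · have hpos : 0 < p := Nat.pos_of_ne_zero hp0
      rw [← SimpleGraph.card_incidenceFinset_eq_degree]
      have hcard : (G.incidenceFinset v).card ≤ (Finset.univ : Finset (Fin p)).card := by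
        refine Finset.card_le_card_of_injOn
          (fun e => if h : e ∈ G.edgeSet then (hN2 e h).exists.choose else ⟨0, hpos⟩)
          (fun _ _ => Finset.mem_univ _) ?_
        intro e1 h1 e2 h2 heq
        rw [Finset.mem_coe, SimpleGraph.mem_incidenceFinset] at h1 h2
        obtain ⟨he1, hv1⟩ := h1
        obtain ⟨he2, hv2⟩ := h2
        simp only [dif_pos he1, dif_pos he2] at heq
        have hs1 := (hN2 e1 he1).exists.choose_spec
        have hs2 := (hN2 e2 he2).exists.choose_spec
        rw [heq] at hs1
        by_contra hne
        exact (hN3 (hN2 e2 he2).exists.choose).2.1 e1 hs1 e2 hs2 hne v ⟨hv1, hv2⟩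
      simpa using hcard
  have : sInf {p | ∃ M : Fin p → Set (Sym2 V), IsPMDecomp G p M} = Δ :=
    le_antisymm (Nat.sInf_le hmemS) (le_csInf ⟨Δ, hmemS⟩ hlow)
  exact this
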